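/- For z ∈ ℝ∖{0} and r ≥ 0 define r₁(z,r) := (i e^{i z r})/(2z) − i/(2z) + r/2 − (r²/(4i)) z. Then there exists an absolute constant C > 0 such that for all z with 0 < |z| < 1, all r ≥ 0, and all k ∈ {0,1,2}, |z|^k | ∂_z^k r₁(z,r) | ≤ C |z|² ⟨r⟩^{3+k}. -/

import Mathlib

open MeasureTheory Real

section AuxResolventRemainder

private lemma aux_normexp (w : ℝ) : ‖Complex.exp (Complex.I * w)‖ = 1 := by
  rw [Complex.norm_exp]; simp

private lemma aux_bd1 (w : ℝ) :
    ‖Complex.exp (Complex.I * w) - 1‖ ≤ 2 * |w| := by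
  rcases le_or_gt |w| 1 with h | h
  · have := Complex.norm_exp_sub_one_le (x := Complex.I * w) (by simpa using h)
    simpa using this
  · calc ‖Complex.exp (Complex.I * w) - 1‖
        ≤ ‖Complex.exp (Complex.I * w)‖ + ‖(1:ℂ)‖ :=
          norm_sub_le _ _
      _ = 2 := by rw [aux_normexp]; norm_num
      _ ≤ 2 * |w| := by nlinarith

private lemma aux_bd2 (w : ℝ) :
    ‖Complex.exp (Complex.I * w) - 1 - Complex.I * w‖ ≤ 3 * |w| ^ 2 := by
  have hIw : ‖Complex.I * w‖ = |w| := by simp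
  rcases le_or_gt |w| 1 with h | h
  · have h1 := Complex.norm_exp_sub_one_sub_id_le (x := Complex.I * w) (by simpa using h)
    rw [hIw] at h1
    nlinarith [abs_nonneg w]
  · calc ‖Complex.exp (Complex.I * w) - 1 - Complex.I * w‖
        ≤ ‖Complex.exp (Complex.I * w) - 1‖ + ‖Complex.I * w‖ :=
          norm_sub_le _ _
      _ ≤ 2 * |w| + |w| := by rw [hIw]; linarith [aux_bd1 w]
      _ ≤ 3 * |w| ^ 2 := by nlinarith

private lemma aux_bd3 (w : ℝ) :
    ‖Complex.exp (Complex.I * w) - 1 - Complex.I * w - (Complex.I * w) ^ 2 / 2‖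
      ≤ 4 * |w| ^ 3 := by
  have hIw : ‖Complex.I * w‖ = |w| := by simp
  have hIw2 : ‖(Complex.I * w) ^ 2 / 2‖ = |w| ^ 2 / 2 := by
    rw [norm_div, norm_pow, hIw]; simp
  rcases le_or_gt |w| 1 with h | h
  · have hb := Complex.exp_bound (x := Complex.I * w) (by simpa using h) (n := 3) (by norm_num)
    have hs : (∑ m ∈ Finset.range 3, (Complex.I * w) ^ m / m.factorial)
        = 1 + Complex.I * w + (Complex.I * w) ^ 2 / 2 := by
      simp [Finset.sum_range_succ, Nat.factorial]
    rw [hs, hIw] at hb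
    have heq : Complex.exp (Complex.I * w) - 1 - Complex.I * w - (Complex.I * w) ^ 2 / 2
        = Complex.exp (Complex.I * w) - (1 + Complex.I * w + (Complex.I * w) ^ 2 / 2) := by ring
    rw [heq]
    refine hb.trans ?_
    have : ((Nat.succ 3 : ℕ) : ℝ) * (((3:ℕ).factorial : ℝ) * (3:ℝ))⁻¹ ≤ 4 := by
      norm_num [Nat.factorial]
    nlinarith [pow_nonneg (abs_nonneg w) 3]
  · calc ‖Complex.exp (Complex.I * w) - 1 - Complex.I * w - (Complex.I * w) ^ 2 / 2‖
        ≤ ‖Complex.exp (Complex.I * w) - 1 - Complex.I * w‖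
            + ‖(Complex.I * w) ^ 2 / 2‖ := norm_sub_le _ _
      _ ≤ (‖Complex.exp (Complex.I * w) - 1‖ + ‖Complex.I * w‖)
            + |w| ^ 2 / 2 := by
          rw [hIw2]
          gcongr
          exact norm_sub_le _ _
      _ ≤ 2 * |w| + |w| + |w| ^ 2 / 2 := by rw [hIw]; linarith [aux_bd1 w]
      _ ≤ 4 * |w| ^ 3 := by nlinarith

private noncomputable def auxG (r : ℝ) : ℂ → ℂ := fun w =>
  Complex.I * Complex.exp (Complex.I * w * r) / (2 * w) - Complex.I / (2 * w)
    + (r : ℂ) / 2 - ((r : ℂ) ^ 2 / (4 * Complex.I)) * w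

private noncomputable def auxG1 (r : ℝ) : ℂ → ℂ := fun w =>
  -(r : ℂ) * Complex.exp (Complex.I * w * r) / (2 * w)
    - Complex.I * Complex.exp (Complex.I * w * r) / (2 * w ^ 2)
    + Complex.I / (2 * w ^ 2) + Complex.I * (r : ℂ) ^ 2 / 4

private noncomputable def auxG2 (r : ℝ) : ℂ → ℂ := fun w =>
  -Complex.I * (r : ℂ) ^ 2 * Complex.exp (Complex.I * w * r) / (2 * w)
    + (r : ℂ) * Complex.exp (Complex.I * w * r) / w ^ 2
    + Complex.I * Complex.exp (Complex.I * w * r) / w ^ 3 - Complex.I / w ^ 3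

private lemma aux_hasDerivAt_exp (r : ℝ) (z : ℂ) :
    HasDerivAt (fun w : ℂ => Complex.exp (Complex.I * w * r))
      (Complex.exp (Complex.I * z * r) * (Complex.I * r)) z := by
  have h : HasDerivAt (fun w : ℂ => Complex.I * w * (r : ℂ)) (Complex.I * r) z := by
    simpa using ((hasDerivAt_id z).const_mul Complex.I).mul_const (r : ℂ)
  exact h.cexp

private lemma aux_hG1 (r : ℝ) {z : ℂ} (hz : z ≠ 0) : HasDerivAt (auxG r) (auxG1 r z) z := by
  have h2z : (2 : ℂ) * z ≠ 0 := by simp [hz]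
  have he := aux_hasDerivAt_exp r z
  have hden : HasDerivAt (fun w : ℂ => 2 * w) 2 z := by
    simpa using (hasDerivAt_id z).const_mul (2 : ℂ)
  have t1 : HasDerivAt (fun w : ℂ => Complex.I * Complex.exp (Complex.I * w * r) / (2 * w))
      ((Complex.I * (Complex.exp (Complex.I * z * r) * (Complex.I * r)) * (2 * z)
        - Complex.I * Complex.exp (Complex.I * z * r) * 2) / (2 * z) ^ 2) z :=
    (he.const_mul Complex.I).div hden h2z
  have t2 : HasDerivAt (fun w : ℂ => Complex.I / (2 * w))
      ((0 * (2 * z) - Complex.I * 2) / (2 * z) ^ 2) z :=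
    (hasDerivAt_const z Complex.I).div hden h2z
  have hc : (r : ℂ) ^ 2 / (4 * Complex.I) = -Complex.I * (r : ℂ) ^ 2 / 4 := by
    rw [div_eq_div_iff (by simp [Complex.I_ne_zero]) (by norm_num : (4:ℂ) ≠ 0)]
    ring_nf
    rw [Complex.I_sq]
    ring
  have t3 : HasDerivAt (fun w : ℂ => ((r : ℂ) ^ 2 / (4 * Complex.I)) * w)
      ((r : ℂ) ^ 2 / (4 * Complex.I)) z := by
    simpa using (hasDerivAt_id z).const_mul ((r : ℂ) ^ 2 / (4 * Complex.I))
  have h := ((t1.sub t2).add_const ((r : ℂ) / 2)).sub t3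
  refine h.congr_deriv (Eq.symm ?_)
  simp only [auxG1]
  rw [hc]
  field_simp [hz, Complex.I_ne_zero]
  ring_nf
  simp only [Complex.I_sq, inv_pow]
  field_simp [hz]

private lemma aux_hG2 (r : ℝ) {z : ℂ} (hz : z ≠ 0) : HasDerivAt (auxG1 r) (auxG2 r z) z := by
  have h2z : (2 : ℂ) * z ≠ 0 := by simp [hz]
  have h2z2 : (2 : ℂ) * z ^ 2 ≠ 0 := by simp [hz]
  have he := aux_hasDerivAt_exp r z
  have hden : HasDerivAt (fun w : ℂ => 2 * w) 2 z := by
    simpa using (hasDerivAt_id z).const_mul (2 : ℂ)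
  have hden2 : HasDerivAt (fun w : ℂ => 2 * w ^ 2) (2 * (2 * z)) z := by
    simpa using ((hasDerivAt_pow 2 z)).const_mul (2 : ℂ)
  have t1 : HasDerivAt (fun w : ℂ => -(r : ℂ) * Complex.exp (Complex.I * w * r) / (2 * w))
      ((-(r : ℂ) * (Complex.exp (Complex.I * z * r) * (Complex.I * r)) * (2 * z)
        - -(r : ℂ) * Complex.exp (Complex.I * z * r) * 2) / (2 * z) ^ 2) z :=
    (he.const_mul (-(r : ℂ))).div hden h2z
  have t2 : HasDerivAt (fun w : ℂ => Complex.I * Complex.exp (Complex.I * w * r) / (2 * w ^ 2))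
      ((Complex.I * (Complex.exp (Complex.I * z * r) * (Complex.I * r)) * (2 * z ^ 2)
        - Complex.I * Complex.exp (Complex.I * z * r) * (2 * (2 * z))) / (2 * z ^ 2) ^ 2) z :=
    (he.const_mul Complex.I).div hden2 h2z2
  have t3 : HasDerivAt (fun w : ℂ => Complex.I / (2 * w ^ 2))
      ((0 * (2 * z ^ 2) - Complex.I * (2 * (2 * z))) / (2 * z ^ 2) ^ 2) z :=
    (hasDerivAt_const z Complex.I).div hden2 h2z2
  have h := ((t1.sub t2).add t3).add_const (Complex.I * (r : ℂ) ^ 2 / 4)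
  refine h.congr_deriv (Eq.symm ?_)
  simp only [auxG2]
  field_simp [hz, Complex.I_ne_zero]
  ring_nf
  simp only [Complex.I_sq, inv_pow]
  field_simp [hz]
  ring

private lemma aux_term_bound (c A zc : ℂ) (m : ℕ) (b B za : ℝ) (hzc : ‖zc‖ = za)
    (hc : ‖c‖ ≤ b) (hA : ‖A‖ ≤ B) (hza : 0 < za) (hB : 0 ≤ B) :
    ‖c * A / zc ^ m‖ ≤ b * B / za ^ m := by
  rw [norm_div, norm_mul, norm_pow, hzc]
  exact div_le_div₀ (mul_nonneg ((norm_nonneg c).trans hc) hB)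
    (mul_le_mul hc hA (norm_nonneg _) ((norm_nonneg c).trans hc))
    (pow_pos hza m) le_rfl

end AuxResolventRemainder

set_option maxHeartbeats 1000000 in
/-- Remainder estimate for the Laurent expansion of the upper entry of the free
resolvent kernel (Lemma 4.1): with
`r₁(z,r) = i e^{izr}/(2z) − i/(2z) + r/2 − (r²/(4i)) z`, one has
`|z|^k |∂_z^k r₁(z,r)| ≤ C |z|² ⟨r⟩^{3+k}` for `0 < |z| < 1`, `r ≥ 0`, `k = 0,1,2`. -/
theorem upper_resolvent_remainder_bound :
    ∃ C : ℝ, 0 < C ∧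
      ∀ (z : ℝ), 0 < |z| → |z| < 1 → ∀ (r : ℝ), 0 ≤ r → ∀ k : ℕ, k ≤ 2 →
        |z| ^ k * ‖iteratedDeriv k (fun w : ℝ =>
            Complex.I * Complex.exp (Complex.I * (w : ℂ) * (r : ℂ)) / (2 * (w : ℂ))
              - Complex.I / (2 * (w : ℂ))
              + (r : ℂ) / 2
              - ((r : ℂ) ^ 2 / (4 * Complex.I)) * (w : ℂ)) z‖
          ≤ C * |z| ^ 2 * Real.sqrt (1 + r ^ 2) ^ (3 + k) := by
  refine ⟨8, by norm_num, ?_⟩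
  intro z hz0 hz1 r hr k hk
  have hz : z ≠ 0 := by
    intro h; rw [h] at hz0; simp at hz0
  have hzc : (z : ℂ) ≠ 0 := Complex.ofReal_ne_zero.mpr hz
  -- the function, as restriction of a complex one
  have hFeq : (fun w : ℝ =>
      Complex.I * Complex.exp (Complex.I * (w : ℂ) * (r : ℂ)) / (2 * (w : ℂ))
        - Complex.I / (2 * (w : ℂ)) + (r : ℂ) / 2
        - ((r : ℂ) ^ 2 / (4 * Complex.I)) * (w : ℂ)) = fun w : ℝ => auxG r (w : ℂ) := rfl
  rw [hFeq]
  set za := |z| with hza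
  have hza0 : 0 < za := hz0
  set s := Real.sqrt (1 + r ^ 2) with hsdef
  have hs2 : s ^ 2 = 1 + r ^ 2 := Real.sq_sqrt (by positivity)
  have hs0 : 0 ≤ s := Real.sqrt_nonneg _
  have hs1 : 1 ≤ s := by nlinarith
  have hrs : r ≤ s := by nlinarith
  -- Taylor pieces
  set A1 : ℂ := Complex.exp (Complex.I * ((z * r : ℝ) : ℂ)) - 1 with hA1
  set A2 : ℂ := A1 - Complex.I * ((z * r : ℝ) : ℂ) with hA2
  set A3 : ℂ := A2 - (Complex.I * ((z * r : ℝ) : ℂ)) ^ 2 / 2 with hA3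
  have hzr : |z * r| = za * r := by rw [abs_mul, abs_of_nonneg hr]
  have hb1 : ‖A1‖ ≤ 2 * (za * r) := by
    rw [hA1]
    simpa [hzr] using aux_bd1 (z * r)
  have hb2 : ‖A2‖ ≤ 3 * (za * r) ^ 2 := by
    rw [hA2, hA1]
    have := aux_bd2 (z * r)
    rw [hzr] at this
    simpa [sub_sub] using this
  have hb3 : ‖A3‖ ≤ 4 * (za * r) ^ 3 := by
    rw [hA3, hA2, hA1]
    have := aux_bd3 (z * r)
    rw [hzr] at this
    simpa [sub_sub] using this
  have hznorm : ‖(z : ℂ)‖ = za := by rw [Complex.norm_real, Real.norm_eq_abs]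
  have hI3 : Complex.I ^ 3 = -Complex.I := by rw [pow_succ, Complex.I_sq]; ring
  -- derivative values
  interval_cases k
  · -- k = 0
    have e0 : auxG r (z : ℂ) = Complex.I / 2 * A3 / (z : ℂ) ^ 1 := by
      simp only [auxG, hA3, hA2, hA1]
      push_cast
      rw [show ((r : ℂ) ^ 2 / (4 * Complex.I)) = -Complex.I * (r : ℂ) ^ 2 / 4 by
        rw [div_eq_div_iff (by simp [Complex.I_ne_zero]) (by norm_num : (4:ℂ) ≠ 0)]
        ring_nf; rw [Complex.I_sq]; ring]
      field_simp [hzc, Complex.I_ne_zero]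
      ring_nf
      simp only [Complex.I_sq, hI3, inv_pow]
      field_simp [hzc]
      ring
    have hI2 : ‖Complex.I / 2‖ ≤ (1 : ℝ) / 2 := by
      rw [norm_div, Complex.norm_I]
      simp
    have hn : ‖iteratedDeriv 0 (fun w : ℝ => auxG r (w : ℂ)) z‖
        ≤ 1 / 2 * (4 * (za * r) ^ 3) / za ^ 1 := by
      rw [iteratedDeriv_zero, e0]
      exact aux_term_bound _ _ _ 1 _ _ _ hznorm hI2 hb3 hza0 (by positivity)
    have hq : 1 / 2 * (4 * (za * r) ^ 3) / za ^ 1 = 2 * za ^ 2 * r ^ 3 := by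
      field_simp; ring
    rw [hq] at hn
    calc za ^ 0 * ‖iteratedDeriv 0 (fun w : ℝ => auxG r (w : ℂ)) z‖
        ≤ 2 * za ^ 2 * r ^ 3 := by simpa using hn
      _ ≤ 8 * za ^ 2 * s ^ (3 + 0) := by
          have h3 : r ^ 3 ≤ s ^ 3 := by gcongr
          have : s ^ (3 + 0) = s ^ 3 := by norm_num
          rw [this]
          nlinarith [sq_nonneg za, pow_nonneg hs0 3]
  · -- k = 1
    have hd1 : iteratedDeriv 1 (fun w : ℝ => auxG r (w : ℂ)) z = auxG1 r (z : ℂ) := by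
      rw [iteratedDeriv_one]
      exact ((aux_hG1 r hzc).comp_ofReal).deriv
    have e1 : auxG1 r (z : ℂ)
        = -(r : ℂ) / 2 * A2 / (z : ℂ) ^ 1 + -(Complex.I / 2) * A3 / (z : ℂ) ^ 2 := by
      simp only [auxG1, hA3, hA2, hA1]
      push_cast
      field_simp [hzc, Complex.I_ne_zero]
      ring_nf
      simp only [Complex.I_sq, hI3, inv_pow]
      field_simp [hzc]
      ring
    have hc1 : ‖-(r : ℂ) / 2‖ ≤ r / 2 := by
      rw [norm_div, norm_neg, Complex.norm_real, Real.norm_eq_abs, abs_of_nonneg hr]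
      simp
    have hc2 : ‖-(Complex.I / 2)‖ ≤ (1 : ℝ) / 2 := by
      rw [norm_neg, norm_div, Complex.norm_I]
      simp
    have hn : ‖iteratedDeriv 1 (fun w : ℝ => auxG r (w : ℂ)) z‖
        ≤ r / 2 * (3 * (za * r) ^ 2) / za ^ 1 + 1 / 2 * (4 * (za * r) ^ 3) / za ^ 2 := by
      rw [hd1, e1]
      refine (norm_add_le _ _).trans ?_
      gcongr
      · exact aux_term_bound _ _ _ 1 _ _ _ hznorm hc1 hb2 hza0 (by positivity)
      · exact aux_term_bound _ _ _ 2 _ _ _ hznorm hc2 hb3 hza0 (by positivity)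
    have hq : r / 2 * (3 * (za * r) ^ 2) / za ^ 1 + 1 / 2 * (4 * (za * r) ^ 3) / za ^ 2
        = 7 / 2 * za * r ^ 3 := by
      field_simp; ring
    rw [hq] at hn
    calc za ^ 1 * ‖iteratedDeriv 1 (fun w : ℝ => auxG r (w : ℂ)) z‖
        ≤ za ^ 1 * (7 / 2 * za * r ^ 3) := by
          gcongr
      _ ≤ 8 * za ^ 2 * s ^ (3 + 1) := by
          have h3 : r ^ 3 ≤ s ^ 3 := by gcongr
          have h4 : s ^ 3 ≤ s ^ 4 := pow_le_pow_right₀ hs1 (by norm_num)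
          have : s ^ (3 + 1) = s ^ 4 := by norm_num
          rw [this]
          nlinarith [sq_nonneg za, pow_nonneg hs0 3, pow_nonneg hs0 4]
  · -- k = 2
    have hd1ev : deriv (fun w : ℝ => auxG r (w : ℂ)) =ᶠ[nhds z] fun w : ℝ => auxG1 r (w : ℂ) := by
      filter_upwards [eventually_ne_nhds hz] with w hw
      exact ((aux_hG1 r (Complex.ofReal_ne_zero.mpr hw)).comp_ofReal).deriv
    have hd2 : iteratedDeriv 2 (fun w : ℝ => auxG r (w : ℂ)) z = auxG2 r (z : ℂ) := by
      rw [show (2 : ℕ) = 1 + 1 from rfl, iteratedDeriv_succ, iteratedDeriv_one]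
      rw [hd1ev.deriv_eq]
      exact ((aux_hG2 r hzc).comp_ofReal).deriv
    have e2 : auxG2 r (z : ℂ)
        = -(Complex.I * (r : ℂ) ^ 2 / 2) * A1 / (z : ℂ) ^ 1 + (r : ℂ) * A2 / (z : ℂ) ^ 2
          + Complex.I * A3 / (z : ℂ) ^ 3 := by
      simp only [auxG2, hA3, hA2, hA1]
      push_cast
      field_simp [hzc, Complex.I_ne_zero]
      ring_nf
      simp only [Complex.I_sq, hI3, inv_pow]
      field_simp [hzc]
      ring
    have hc1 : ‖-(Complex.I * (r : ℂ) ^ 2 / 2)‖ ≤ r ^ 2 / 2 := by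
      rw [norm_neg, norm_div, norm_mul, Complex.norm_I, one_mul,
        norm_pow, Complex.norm_real, Real.norm_eq_abs, abs_of_nonneg hr]
      simp
    have hc2 : ‖(r : ℂ)‖ ≤ r := by
      rw [Complex.norm_real, Real.norm_eq_abs, abs_of_nonneg hr]
    have hc3 : ‖Complex.I‖ ≤ (1 : ℝ) := by
      rw [Complex.norm_I]
    have hn : ‖iteratedDeriv 2 (fun w : ℝ => auxG r (w : ℂ)) z‖
        ≤ r ^ 2 / 2 * (2 * (za * r)) / za ^ 1 + r * (3 * (za * r) ^ 2) / za ^ 2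
          + 1 * (4 * (za * r) ^ 3) / za ^ 3 := by
      rw [hd2, e2]
      refine (norm_add₃_le).trans ?_
      gcongr
      · exact aux_term_bound _ _ _ 1 _ _ _ hznorm hc1 hb1 hza0 (by positivity)
      · exact aux_term_bound _ _ _ 2 _ _ _ hznorm hc2 hb2 hza0 (by positivity)
      · exact aux_term_bound _ _ _ 3 _ _ _ hznorm hc3 hb3 hza0 (by positivity)
    have hq : r ^ 2 / 2 * (2 * (za * r)) / za ^ 1 + r * (3 * (za * r) ^ 2) / za ^ 2
          + 1 * (4 * (za * r) ^ 3) / za ^ 3 = 8 * r ^ 3 := by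
      field_simp; ring
    rw [hq] at hn
    calc za ^ 2 * ‖iteratedDeriv 2 (fun w : ℝ => auxG r (w : ℂ)) z‖
        ≤ za ^ 2 * (8 * r ^ 3) := by gcongr
      _ ≤ 8 * za ^ 2 * s ^ (3 + 2) := by
          have h3 : r ^ 3 ≤ s ^ 3 := by gcongr
          have h5 : s ^ 3 ≤ s ^ 5 := pow_le_pow_right₀ hs1 (by norm_num)
          have : s ^ (3 + 2) = s ^ 5 := by norm_num
          rw [this]
          nlinarith [sq_nonneg za, pow_nonneg hs0 3, pow_nonneg hs0 5]
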